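/- Let L_κ be the length function of the κ code. For every non-increasing probability distribution P on ℕ⁺ with finite entropy, E_P(L_κ) ≤ 5 + H(P) + 2·log₂(1 + H(P)). Consequently, the κ code is asymptotically optimal: E_P(L_κ)/max{1,H(P)} ≤ R(H(P)) where R(h) = (5 + h + 2 log₂(1+h))/max{1,h} tends to 1 as h → ∞. -/

import Mathlib

/-- The codeword length function of the κ code. -/
def kappaLen (m : ℕ) : ℕ :=
  if m = 1 then 1
  else if m ≤ 3 then 4
  else if m ≤ 7 then 5
  else 2 + Nat.log 2 m + 2 * Nat.log 2 (Nat.log 2 m - 1)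

lemma tangent_log {x a : ℝ} (hx : 0 < x) (ha : 0 < a) :
    Real.log x ≤ Real.log a + x / a - 1 := by
  have h := Real.log_le_sub_one_of_pos (show 0 < x / a from div_pos hx ha)
  rw [Real.log_div hx.ne' ha.ne'] at h
  linarith

lemma kappaLen_le (m : ℕ) (hm : 1 ≤ m) :
    (kappaLen m : ℝ) ≤ 5 + Real.logb 2 m + 2 * Real.logb 2 (1 + Real.logb 2 m) := by
  have hm0 : (1 : ℝ) ≤ m := by exact_mod_cast hm
  have hlb : 0 ≤ Real.logb 2 m := Real.logb_nonneg one_lt_two hm0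
  have hlb2 : 0 ≤ Real.logb 2 (1 + Real.logb 2 m) :=
    Real.logb_nonneg one_lt_two (by linarith)
  by_cases h1 : m = 1
  · subst h1; simp [kappaLen]
  by_cases h3 : m ≤ 3
  · rw [kappaLen, if_neg h1, if_pos h3]; push_cast; linarith
  by_cases h7 : m ≤ 7
  · rw [kappaLen, if_neg h1, if_neg h3, if_pos h7]; push_cast; linarith
  · rw [kappaLen, if_neg h1, if_neg h3, if_neg h7]
    have hm8 : 8 ≤ m := by omega
    set k := Nat.log 2 m with hk
    have hk3 : 3 ≤ k := by
      exact (Nat.le_log_iff_pow_le one_lt_two (by omega)).mpr (show 2^3 ≤ m by omega)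
    have h1' : (k : ℝ) ≤ Real.logb 2 m := Real.natLog_le_logb m 2
    have h2' : (Nat.log 2 (k - 1) : ℝ) ≤ Real.logb 2 (k - 1 : ℕ) :=
      Real.natLog_le_logb (k - 1) 2
    have hcast : ((k - 1 : ℕ) : ℝ) = (k : ℝ) - 1 := by
      push_cast [Nat.cast_sub (by omega : 1 ≤ k)]; ring
    have h3' : Real.logb 2 ((k - 1 : ℕ) : ℝ) ≤ Real.logb 2 (1 + Real.logb 2 m) := by
      apply Real.logb_le_logb_of_le one_lt_two
      · rw [hcast]; have : (3 : ℝ) ≤ (k : ℝ) := by exact_mod_cast hk3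
        linarith
      · rw [hcast]; linarith
    push_cast
    linarith

lemma kappa_limit :
    Filter.Tendsto (fun h : ℝ => (5 + h + 2 * Real.logb 2 (1 + h)) / max 1 h)
      Filter.atTop (nhds 1) := by
  have hlog2 : (0:ℝ) < Real.log 2 := Real.log_pos one_lt_two
  have h1 : Filter.Tendsto (fun h : ℝ => 5 / h) Filter.atTop (nhds 0) :=
    tendsto_const_nhds.div_atTop Filter.tendsto_id
  have h2 : Filter.Tendsto (fun h : ℝ => Real.log (1 + h) / h) Filter.atTop (nhds 0) := by
    have base := Real.tendsto_pow_log_div_mul_add_atTop 1 (-1) 1 one_ne_zero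
    have comp := base.comp (Filter.tendsto_atTop_add_const_left Filter.atTop (1:ℝ)
      Filter.tendsto_id)
    refine comp.congr' ?_
    filter_upwards [Filter.eventually_ge_atTop (0:ℝ)] with x hx
    simp [Function.comp]
  have h3 : Filter.Tendsto (fun h : ℝ => 5 / h + 1 + (2 / Real.log 2) * (Real.log (1 + h) / h))
      Filter.atTop (nhds 1) := by
    have := (h1.add (tendsto_const_nhds (x := (1:ℝ)))).add (h2.const_mul (2 / Real.log 2))
    simpa using this
  refine h3.congr' ?_
  filter_upwards [Filter.eventually_ge_atTop (1:ℝ)] with x hx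
  rw [max_eq_right hx]
  have hx0 : x ≠ 0 := by linarith
  rw [Real.logb]
  field_simp

/-- For every non-increasing probability distribution P with finite entropy,
E_P(L_κ) ≤ 5 + H(P) + 2 log₂(1 + H(P)); consequently the κ code is
asymptotically optimal with R(h) = (5 + h + 2 log₂(1+h)) / max{1,h} → 1. -/
theorem kappa_asymptotically_optimal
    (P : ℕ → ℝ)
    (hnonneg : ∀ n, 1 ≤ n → 0 ≤ P n)
    (hmono : ∀ m, 1 ≤ m → P (m + 1) ≤ P m)
    (hsum : HasSum (fun n : ℕ => P (n + 1)) 1)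
    (hent : Summable (fun n : ℕ => P (n + 1) * Real.logb 2 (P (n + 1))))
    (hexp : Summable (fun n : ℕ => (kappaLen (n + 1) : ℝ) * P (n + 1))) :
    (∑' n : ℕ, (kappaLen (n + 1) : ℝ) * P (n + 1)
        ≤ 5 + (-∑' n : ℕ, P (n + 1) * Real.logb 2 (P (n + 1)))
          + 2 * Real.logb 2 (1 + (-∑' n : ℕ, P (n + 1) * Real.logb 2 (P (n + 1))))) ∧
    ((∑' n : ℕ, (kappaLen (n + 1) : ℝ) * P (n + 1))
        / max 1 (-∑' n : ℕ, P (n + 1) * Real.logb 2 (P (n + 1)))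
        ≤ (5 + (-∑' n : ℕ, P (n + 1) * Real.logb 2 (P (n + 1)))
            + 2 * Real.logb 2 (1 + (-∑' n : ℕ, P (n + 1) * Real.logb 2 (P (n + 1)))))
          / max 1 (-∑' n : ℕ, P (n + 1) * Real.logb 2 (P (n + 1)))) ∧
    Filter.Tendsto
      (fun h : ℝ => (5 + h + 2 * Real.logb 2 (1 + h)) / max 1 h)
      Filter.atTop (nhds 1) := by
  have hlog2 : (0:ℝ) < Real.log 2 := Real.log_pos one_lt_two
  have hP : ∀ n : ℕ, 0 ≤ P (n + 1) := fun n => hnonneg (n + 1) (by omega)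
  have hPle1 : ∀ n : ℕ, P (n + 1) ≤ 1 := fun n => le_hasSum hsum n (fun m _ => hP m)
  set H : ℝ := -∑' n : ℕ, P (n + 1) * Real.logb 2 (P (n + 1)) with hHdef
  have hH0 : (0:ℝ) ≤ H := by
    rw [hHdef, le_neg, neg_zero]
    apply tsum_nonpos
    intro n
    exact mul_nonpos_of_nonneg_of_nonpos (hP n)
      (Real.logb_nonpos one_lt_two (hP n) (hPle1 n))
  have key : ∀ a j : ℕ, P (a + 1 + j) ≤ P (a + 1) := by
    intro a j
    induction j with
    | zero => simp
    | succ j ih => calc P (a + 1 + (j+1)) = P ((a + 1 + j) + 1) := by ring_nf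
                    _ ≤ P (a + 1 + j) := hmono _ (by omega)
                    _ ≤ P (a + 1) := ih
  have hmP : ∀ n : ℕ, ((n + 1 : ℕ) : ℝ) * P (n + 1) ≤ 1 := by
    intro n
    have hcard := Finset.card_nsmul_le_sum (Finset.range (n + 1)) (fun k => P (k + 1))
      (P (n + 1)) (fun k hk => by
        have hk' : k ≤ n := by simpa using Finset.mem_range_succ_iff.mp hk
        have := key (k) (n - k)
        have he : k + 1 + (n - k) = n + 1 := by omega
        rw [he] at this; exact this)
    have hsumle : ∑ k ∈ Finset.range (n + 1), P (k + 1) ≤ 1 :=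
      sum_le_hasSum (Finset.range (n + 1)) (fun m _ => hP m) hsum
    simp only [Finset.card_range, nsmul_eq_mul] at hcard
    calc ((n + 1 : ℕ) : ℝ) * P (n + 1) ≤ ∑ k ∈ Finset.range (n + 1), P (k + 1) := by
          exact_mod_cast hcard
      _ ≤ 1 := hsumle
  have hlogm : ∀ n : ℕ, P (n + 1) * Real.logb 2 ((n + 1 : ℕ) : ℝ)
      ≤ -(P (n + 1) * Real.logb 2 (P (n + 1))) := by
    intro n
    rcases (hP n).eq_or_lt with h | h
    · simp [← h]
    · have hpos : (0:ℝ) < ((n + 1 : ℕ) : ℝ) := by positivity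
      have hmul : Real.logb 2 (((n + 1 : ℕ) : ℝ) * P (n + 1)) ≤ 0 :=
        Real.logb_nonpos one_lt_two (by positivity) (hmP n)
      rw [Real.logb_mul hpos.ne' h.ne'] at hmul
      nlinarith [hmul, h]
  have hlognn : ∀ n : ℕ, 0 ≤ Real.logb 2 ((n + 1 : ℕ) : ℝ) := by
    intro n
    exact Real.logb_nonneg one_lt_two (by exact_mod_cast Nat.one_le_iff_ne_zero.mpr (by omega))
  have S2 : Summable (fun n : ℕ => P (n + 1) * Real.logb 2 ((n + 1 : ℕ) : ℝ)) := by
    apply Summable.of_nonneg_of_le (fun n => mul_nonneg (hP n) (hlognn n)) hlogm hent.neg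
  have hTlog : ∑' n : ℕ, P (n + 1) * Real.logb 2 ((n + 1 : ℕ) : ℝ) ≤ H := by
    have := Summable.tsum_le_tsum hlogm S2 hent.neg
    rwa [tsum_neg] at this
  set t : ℝ := 2 / ((1 + H) * Real.log 2) with htdef
  have hHpos : (0:ℝ) < 1 + H := by linarith
  have ht0 : 0 ≤ t := by positivity
  set C : ℝ := 5 + 2 * Real.logb 2 (1 + H) - H * t with hCdef
  have hpt : ∀ n : ℕ, (kappaLen (n + 1) : ℝ) * P (n + 1) ≤
      C * P (n + 1) + (1 + t) * (P (n + 1) * Real.logb 2 ((n + 1 : ℕ) : ℝ)) := by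
    intro n
    set L : ℝ := Real.logb 2 ((n + 1 : ℕ) : ℝ) with hLdef
    have hL0 : 0 ≤ L := hlognn n
    have hB := kappaLen_le (n + 1) (by omega)
    rw [← hLdef] at hB
    have htan : Real.log (1 + L) ≤ Real.log (1 + H) + (1 + L) / (1 + H) - 1 :=
      tangent_log (by linarith) hHpos
    have h2 : Real.logb 2 (1 + L) ≤ Real.logb 2 (1 + H) + (L - H) / ((1 + H) * Real.log 2) := by
      rw [Real.logb, Real.logb, div_le_iff₀ hlog2]
      have e1 : (Real.log (1 + H) / Real.log 2 + (L - H) / ((1 + H) * Real.log 2))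
          * Real.log 2 = Real.log (1 + H) + (L - H) / (1 + H) := by
        field_simp
      rw [e1]
      have e2 : (1 + L) / (1 + H) - 1 = (L - H) / (1 + H) := by
        field_simp
        ring
      linarith [htan, e2.symm.le, e2.le]
    have e3 : 2 * ((L - H) / ((1 + H) * Real.log 2)) = t * L - t * H := by
      rw [htdef]
      field_simp
    have hstep : (kappaLen (n + 1) : ℝ) ≤ C + (1 + t) * L := by
      rw [hCdef]; nlinarith [hB, h2, e3]
    calc (kappaLen (n + 1) : ℝ) * P (n + 1) ≤ (C + (1 + t) * L) * P (n + 1) :=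
          mul_le_mul_of_nonneg_right hstep (hP n)
      _ = C * P (n + 1) + (1 + t) * (P (n + 1) * L) := by ring
  have hrhs : Summable (fun n : ℕ => C * P (n + 1)
      + (1 + t) * (P (n + 1) * Real.logb 2 ((n + 1 : ℕ) : ℝ))) :=
    (hsum.summable.mul_left C).add (S2.mul_left (1 + t))
  have htsum := Summable.tsum_le_tsum hpt hexp hrhs
  rw [Summable.tsum_add (hsum.summable.mul_left C) (S2.mul_left (1 + t)), tsum_mul_left,
    tsum_mul_left, hsum.tsum_eq] at htsum
  have hmain : ∑' n : ℕ, (kappaLen (n + 1) : ℝ) * P (n + 1)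
      ≤ 5 + H + 2 * Real.logb 2 (1 + H) := by
    have h4 : (1 + t) * (∑' n : ℕ, P (n + 1) * Real.logb 2 ((n + 1 : ℕ) : ℝ))
        ≤ (1 + t) * H := mul_le_mul_of_nonneg_left hTlog (by linarith)
    have h5 : C * 1 + (1 + t) * H = 5 + H + 2 * Real.logb 2 (1 + H) := by
      rw [hCdef]; ring
    linarith
  refine ⟨hmain, ?_, kappa_limit⟩
  have hd : (0:ℝ) < max 1 H := lt_of_lt_of_le one_pos (le_max_left _ _)
  exact div_le_div_of_nonneg_right hmain hd.le
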